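/- Let G be a graph with maximum degree Δ, K ⊆ V(G), and col a partial proper coloring of G. Let M be a colorful matching in K: a set of anti-edges within K whose endpoints receive the same color, with each anti-edge of M having a distinct color. Let P(K) = [Δ+1] \ col(K) be the clique palette (colors from {1,...,Δ+1} not used by any node of K). Then for every vertex v ∈ K, |P(K)| ≥ |K̂| + 1 + e_v - a_v + |M|, where K̂ is the set of uncolored vertices of K, e_v = |N(v)\K|, and a_v = |K \ N(v)|. -/

import Mathlib

open scoped Classical

/-- with a colorful matching `M` in `K`, the clique palette satisfies
`|P(K)| ≥ |K̂| + 1 + e_v - a_v + |M|` for every `v ∈ K`. -/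
theorem stmt1 {V : Type*} [Fintype V] [DecidableEq V] (G : SimpleGraph V)
    [DecidableRel G.Adj] (Δ : ℕ) (hΔ : ∀ v, G.degree v ≤ Δ)
    (col : V → Option (Fin (Δ + 1)))
    (hproper : ∀ u w, G.Adj u w → ∀ c, col u = some c → col w ≠ some c)
    (K : Finset V) (M : Finset (V × V))
    (hM : ∀ p ∈ M, p.1 ∈ K ∧ p.2 ∈ K ∧ p.1 ≠ p.2 ∧ ¬ G.Adj p.1 p.2 ∧
      col p.1 = col p.2 ∧ (col p.1).isSome)
    (hMcolors : ∀ p ∈ M, ∀ q ∈ M, p ≠ q → col p.1 ≠ col q.1)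
    (hMmatching : ∀ p ∈ M, ∀ q ∈ M, p ≠ q →
      p.1 ≠ q.1 ∧ p.1 ≠ q.2 ∧ p.2 ≠ q.1 ∧ p.2 ≠ q.2)
    (v : V) (hv : v ∈ K) :
    ((K.filter (fun u => col u = none)).card : ℤ) + 1
        + ((G.neighborFinset v \ K).card : ℤ)
        - ((K \ G.neighborFinset v).card : ℤ)
        + (M.card : ℤ) ≤
      ((Finset.univ.filter (fun c : Fin (Δ + 1) => ∀ u ∈ K, col u ≠ some c)).card : ℤ) := by
  classical
  set Kc := K.filter (fun u => (col u).isSome) with hKcdef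
  set Kn := K.filter (fun u => col u = none) with hKndef
  set P := Finset.univ.filter (fun c : Fin (Δ + 1) => ∀ u ∈ K, col u ≠ some c) with hPdef
  set U := Finset.univ.filter (fun c : Fin (Δ + 1) => ¬ ∀ u ∈ K, col u ≠ some c) with hUdef
  -- P and U partition the palette
  have hPU : P.card + U.card = Δ + 1 := by
    have h := Finset.card_filter_add_card_filter_not
      (s := (Finset.univ : Finset (Fin (Δ + 1))))
      (p := fun c : Fin (Δ + 1) => ∀ u ∈ K, col u ≠ some c)
    simpa [hPdef, hUdef] using h
  -- K splits into colored and uncolored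
  have hKsplit : Kn.card + Kc.card = K.card := by
    have h := Finset.card_filter_add_card_filter_not
      (s := K) (p := fun u => col u = none)
    simpa [hKndef, hKcdef, Option.isSome_iff_ne_none] using h
  -- degree bound
  have hdeg : K.card + (G.neighborFinset v \ K).card ≤ Δ + (K \ G.neighborFinset v).card := by
    have h1 : (K ∩ G.neighborFinset v).card + (K \ G.neighborFinset v).card = K.card :=
      Finset.card_inter_add_card_sdiff K (G.neighborFinset v)
    have h2 : (G.neighborFinset v ∩ K).card + (G.neighborFinset v \ K).card
        = (G.neighborFinset v).card :=
      Finset.card_inter_add_card_sdiff (G.neighborFinset v) K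
    have h3 : (G.neighborFinset v).card ≤ Δ := by
      rw [SimpleGraph.card_neighborFinset_eq_degree]; exact hΔ v
    rw [Finset.inter_comm] at h1
    omega
  -- the colors of the matching
  set CM := M.image (fun p => (col p.1).getD 0) with hCMdef
  have hCMcard : CM.card = M.card := by
    apply Finset.card_image_of_injOn
    intro p hp q hq hpq
    simp only [Finset.mem_coe] at hp hq
    simp only at hpq
    by_contra hne
    obtain ⟨a, ha⟩ := Option.isSome_iff_exists.mp (hM p hp).2.2.2.2.2
    obtain ⟨b, hb⟩ := Option.isSome_iff_exists.mp (hM q hq).2.2.2.2.2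
    rw [ha, hb] at hpq
    simp only [Option.getD_some] at hpq
    exact hMcolors p hp q hq hne (by rw [ha, hb, hpq])
  have hCMsub : CM ⊆ U := by
    intro c hc
    obtain ⟨p, hp, hpc⟩ := Finset.mem_image.mp hc
    obtain ⟨a, ha⟩ := Option.isSome_iff_exists.mp (hM p hp).2.2.2.2.2
    simp only [hUdef, Finset.mem_filter, Finset.mem_univ, true_and]
    push_neg
    refine ⟨p.1, (hM p hp).1, ?_⟩
    rw [ha]; rw [ha] at hpc; simp at hpc; rw [hpc]
  -- fiberwise counting: |Kc| ≥ |U| + |M|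
  have hfib : Kc.card = ∑ c ∈ U, (Kc.filter (fun u => (col u).getD 0 = c)).card := by
    apply Finset.card_eq_sum_card_fiberwise
    intro u hu
    simp only [hKcdef, Finset.mem_coe, Finset.mem_filter] at hu
    obtain ⟨a, ha⟩ := Option.isSome_iff_exists.mp hu.2
    simp only [hUdef, Finset.mem_coe, Finset.mem_filter, Finset.mem_univ, true_and]
    push_neg
    exact ⟨u, hu.1, by simp [ha]⟩
  have hbound : U.card + M.card ≤ Kc.card := by
    rw [hfib]
    have hsum : ∀ c ∈ U, (if c ∈ CM then 2 else 1)
        ≤ (Kc.filter (fun u => (col u).getD 0 = c)).card := by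
      intro c hcU
      by_cases hc : c ∈ CM
      · simp only [hc, if_true]
        obtain ⟨p, hp, hpc⟩ := Finset.mem_image.mp hc
        obtain ⟨p1K, p2K, hne, -, hcoleq, hsome⟩ := hM p hp
        obtain ⟨a, ha⟩ := Option.isSome_iff_exists.mp hsome
        have hac : a = c := by rw [ha] at hpc; simpa using hpc
        have hp1 : p.1 ∈ Kc.filter (fun u => (col u).getD 0 = c) := by
          simp [hKcdef, Finset.mem_filter, p1K, ha, hac, hsome]
        have hp2 : p.2 ∈ Kc.filter (fun u => (col u).getD 0 = c) := by
          simp [hKcdef, Finset.mem_filter, p2K, ← hcoleq, ha, hac, hsome]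
        exact Finset.one_lt_card.mpr ⟨p.1, hp1, p.2, hp2, hne⟩
      · simp only [hc, if_false]
        rw [Nat.one_le_iff_ne_zero, ← Nat.pos_iff_ne_zero, Finset.card_pos]
        simp only [hUdef, Finset.mem_filter, Finset.mem_univ, true_and] at hcU
        push_neg at hcU
        obtain ⟨u, huK, huc⟩ := hcU
        exact ⟨u, by simp [hKcdef, Finset.mem_filter, huK, huc]⟩
    have h1 : U.filter (fun c => c ∈ CM) = CM := by
      rw [Finset.filter_mem_eq_inter, Finset.inter_eq_right.mpr hCMsub]
    have h2 : (U.filter (fun c => c ∈ CM)).card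
        + (U.filter (fun c => ¬ c ∈ CM)).card = U.card :=
      Finset.card_filter_add_card_filter_not (p := fun c => c ∈ CM)
    have h3 : ∑ c ∈ U, (if c ∈ CM then 2 else 1)
        = 2 * (U.filter (fun c => c ∈ CM)).card
          + 1 * (U.filter (fun c => ¬ c ∈ CM)).card := by
      rw [Finset.sum_ite, Finset.sum_const, Finset.sum_const, smul_eq_mul, smul_eq_mul,
        mul_comm, mul_comm (U.filter (fun c => ¬ c ∈ CM)).card 1]
    have h1c : (U.filter (fun c => c ∈ CM)).card = M.card := by
      rw [h1, hCMcard]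
    calc U.card + M.card = ∑ c ∈ U, (if c ∈ CM then 2 else 1) := by
          rw [h3]; omega
        _ ≤ _ := Finset.sum_le_sum hsum
  -- final arithmetic
  omega
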